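/- Let A be a finite nonempty alphabet, let J ≥ 1 be a natural number, let Λ assign to each finite string over A a real number with Λ(y) = 0 for every string y of length J, and let D assign to each string s over A of length < J a function D(s) : A → ℝ with ∑_{a∈A} D(s)(a) = 1. For a nonempty string y = y₁…y_j of length j ≤ J define the prediction probability p̄_v(y) = (1 − Λ(y₁…y_j)) · ∏_{l=1}^{j} D(y₁…y_{l−1})(y_l) · ∏_{l=1}^{j−1} Λ(y₁…y_l). Then ∑_{j=1}^{J} ∑_{y ∈ A^j} p̄_v(y) = 1. -/

import Mathlib

open Finset

section aux

variable {A : Type*}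

/-- Product of the `D`-factors along a string. -/
noncomputable def pvDp (D : List A → A → ℝ) (y : List A) : ℝ :=
  ∏ l ∈ Finset.range y.length,
    if h : l < y.length then D (y.take l) (y.get ⟨l, h⟩) else 1

/-- Product of the `Λ`-factors along the proper prefixes of a string. -/
noncomputable def pvLp (Λ : List A → ℝ) (y : List A) : ℝ :=
  ∏ l ∈ Finset.Icc 1 (y.length - 1), Λ (y.take l)

lemma pvDp_eq (D : List A → A → ℝ) (y : List A) :
    (∏ l : Fin y.length, D (y.take l) (y.get l)) = pvDp D y := by
  rw [pvDp, ← Fin.prod_univ_eq_prod_range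
    (fun l => if h : l < y.length then D (y.take l) (y.get ⟨l, h⟩) else 1)]
  exact Finset.prod_congr rfl fun l _ => by rw [dif_pos l.isLt]

lemma pvDp_aux (D : List A → A → ℝ) (z : List A) (n : ℕ) (hz : z.length = n) :
    pvDp D z = ∏ l ∈ Finset.range n,
      if h : l < z.length then D (z.take l) (z.get ⟨l, h⟩) else 1 := by
  subst hz; rfl

lemma pvDp_append (D : List A → A → ℝ) (y : List A) (a : A) :
    pvDp D (y ++ [a]) = pvDp D y * D y a := by
  rw [pvDp_aux D (y ++ [a]) (y.length + 1) (by simp), Finset.prod_range_succ]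
  congr 1
  · rw [pvDp]
    refine Finset.prod_congr rfl fun l hl => ?_
    rw [Finset.mem_range] at hl
    rw [dif_pos (by simp; omega), dif_pos hl]
    congr 1
    · exact List.take_append_of_le_length (by omega)
    · simp only [List.get_eq_getElem]
      exact List.getElem_append_left (by omega)
  · rw [dif_pos (by simp)]
    congr 1
    · rw [List.take_append_of_le_length le_rfl, List.take_length]
    · simp
lemma pvLp_append (Λ : List A → ℝ) (y : List A) (a : A) (hy : 1 ≤ y.length) :
    pvLp Λ (y ++ [a]) = pvLp Λ y * Λ y := by
  obtain ⟨m, hm⟩ : ∃ m, y.length = m + 1 := ⟨y.length - 1, by omega⟩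
  rw [pvLp, pvLp]
  have hlen : (y ++ [a]).length - 1 = m + 1 := by simp [hm]
  rw [hlen, hm, Finset.prod_Icc_succ_top (by omega)]
  simp only [Nat.add_sub_cancel]
  congr 1
  · refine Finset.prod_congr rfl fun l hl => ?_
    rw [Finset.mem_Icc] at hl
    congr 1
    exact List.take_append_of_le_length (by omega)
  · congr 1
    rw [← hm, List.take_append_of_le_length le_rfl, List.take_length]

lemma ofFn_snoc' {n : ℕ} (f : Fin n → A) (a : A) :
    List.ofFn (Fin.snoc f a) = List.ofFn f ++ [a] := by
  rw [List.ofFn_succ']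
  simp [List.concat_eq_append]

end aux

theorem nonuniform_prediction_sums_to_one
    {A : Type*} [Fintype A] [Nonempty A] (J : ℕ) (hJ : 1 ≤ J)
    (Λ : List A → ℝ) (D : List A → A → ℝ)
    (hΛ : ∀ y : List A, y.length = J → Λ y = 0)
    (hD : ∀ s : List A, s.length < J → ∑ a, D s a = 1) :
    ∑ j ∈ Finset.Icc 1 J, ∑ f : Fin j → A,
        ((1 - Λ (List.ofFn f))
          * ∏ l : Fin (List.ofFn f).length,
              D ((List.ofFn f).take l) ((List.ofFn f).get l))
          * ∏ l ∈ Finset.Icc 1 ((List.ofFn f).length - 1),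
              Λ ((List.ofFn f).take l)
      = 1 := by
  classical
  set P : ℕ → ℝ := fun j => ∑ f : Fin j → A,
    pvDp D (List.ofFn f) * pvLp Λ (List.ofFn f) with hP
  set Q : ℕ → ℝ := fun j => ∑ f : Fin j → A,
    Λ (List.ofFn f) * (pvDp D (List.ofFn f) * pvLp Λ (List.ofFn f)) with hQ
  have hPapp : ∀ j, P j = ∑ f : Fin j → A,
    pvDp D (List.ofFn f) * pvLp Λ (List.ofFn f) := fun _ => rfl
  have hQapp : ∀ j, Q j = ∑ f : Fin j → A,
    Λ (List.ofFn f) * (pvDp D (List.ofFn f) * pvLp Λ (List.ofFn f)) := fun _ => rfl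
  have hstep : ∀ j, 1 ≤ j → j < J → Q j = P (j + 1) := by
    intro j hj1 hjJ
    have hcomp : P (j + 1) = ∑ x : A × (Fin j → A),
        pvDp D (List.ofFn ((Fin.snocEquiv (fun _ : Fin (j+1) => A)) x))
          * pvLp Λ (List.ofFn ((Fin.snocEquiv (fun _ : Fin (j+1) => A)) x)) := by
      rw [hPapp]
      exact (Equiv.sum_comp (Fin.snocEquiv (fun _ : Fin (j+1) => A))
        (fun g => pvDp D (List.ofFn g) * pvLp Λ (List.ofFn g))).symm
    rw [hcomp]
    have hx : ∀ x : A × (Fin j → A),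
        List.ofFn ((Fin.snocEquiv (fun _ : Fin (j+1) => A)) x)
          = List.ofFn x.2 ++ [x.1] := by
      intro x
      have : ((Fin.snocEquiv (fun _ : Fin (j+1) => A)) x) = Fin.snoc x.2 x.1 := by
        funext i; simp [Fin.snocEquiv]
      rw [this, ofFn_snoc']
    rw [Fintype.sum_prod_type]
    rw [Finset.sum_comm]
    rw [hQapp]
    refine Finset.sum_congr rfl fun f _ => ?_
    have hyl : (List.ofFn f).length = j := by simp
    have h1 : ∀ a : A,
        pvDp D (List.ofFn ((Fin.snocEquiv (fun _ : Fin (j+1) => A)) (a, f)))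
          * pvLp Λ (List.ofFn ((Fin.snocEquiv (fun _ : Fin (j+1) => A)) (a, f)))
        = D (List.ofFn f) a
          * (Λ (List.ofFn f) * (pvDp D (List.ofFn f) * pvLp Λ (List.ofFn f))) := by
      intro a
      rw [hx (a, f)]
      rw [pvDp_append, pvLp_append Λ _ _ (by rw [hyl]; omega)]
      ring
    rw [Finset.sum_congr rfl fun a _ => h1 a, ← Finset.sum_mul,
      hD (List.ofFn f) (by rw [hyl]; omega), one_mul]
  have hQJ : Q J = 0 := by
    rw [hQapp]
    refine Finset.sum_eq_zero fun f _ => ?_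
    rw [hΛ (List.ofFn f) (by simp), zero_mul]
  have hP1 : P 1 = 1 := by
    rw [hPapp]
    have h1 : ∀ f : Fin 1 → A,
        pvDp D (List.ofFn f) * pvLp Λ (List.ofFn f) = D [] (f 0) := by
      intro f
      have hf : List.ofFn f = [f 0] := by simp [List.ofFn_succ]
      rw [hf, pvLp]
      simp only [List.length_cons, List.length_nil, Nat.zero_add]
      rw [show (1 : ℕ) - 1 = 0 from rfl, Finset.Icc_eq_empty (by omega),
        Finset.prod_empty, mul_one, pvDp]
      simp
    rw [Finset.sum_congr rfl fun f _ => h1 f]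
    have := Fintype.sum_equiv (Equiv.funUnique (Fin 1) A)
      (fun f : Fin 1 → A => D [] (f 0)) (fun a => D [] a)
      (fun f => by simp [Equiv.funUnique])
    rw [this]
    exact hD [] (by simp; omega)
  have key : ∀ m, 1 ≤ m → m ≤ J →
      ∑ j ∈ Finset.Icc 1 m, (P j - Q j) = P 1 - Q m := by
    intro m hm
    induction m, hm using Nat.le_induction with
    | base => intro _; simp
    | succ n hn ih =>
      intro hnJ
      rw [Finset.sum_Icc_succ_top (by omega), ih (by omega),
        hstep n hn (by omega)]
      ring
  calc ∑ j ∈ Finset.Icc 1 J, ∑ f : Fin j → A,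
        ((1 - Λ (List.ofFn f))
          * ∏ l : Fin (List.ofFn f).length,
              D ((List.ofFn f).take l) ((List.ofFn f).get l))
          * ∏ l ∈ Finset.Icc 1 ((List.ofFn f).length - 1),
              Λ ((List.ofFn f).take l)
      = ∑ j ∈ Finset.Icc 1 J, (P j - Q j) := by
        refine Finset.sum_congr rfl fun j _ => ?_
        rw [hPapp, hQapp, ← Finset.sum_sub_distrib]
        refine Finset.sum_congr rfl fun f _ => ?_
        rw [pvDp_eq]
        show (1 - Λ (List.ofFn f)) * pvDp D (List.ofFn f)
            * pvLp Λ (List.ofFn f) = _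
        ring
    _ = P 1 - Q J := key J hJ le_rfl
    _ = 1 := by rw [hP1, hQJ]; ring
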